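/- arXiv:1102.2878 — 4 statements merged into one kernel-verified Lean document; each statement's English description precedes it below -/
import Mathlib

section
/- For every t, s ∈ ℝ, the generating function identity e^{2ts − s²} = Σ_{n=0}^{∞} (sⁿ/n!) Hₙ(t) holds, where the series on the right converges. -/
/-- The `n`-th physicists' Hermite polynomial (as a function), defined by the
Rodrigues formula `Hₙ(t) = (−1)ⁿ e^{t²} (dⁿ/dtⁿ) e^{−t²}`. -/
noncomputable def hermitePoly (n : ℕ) (t : ℝ) : ℝ :=
  (-1 : ℝ) ^ n * Real.exp (t ^ 2) * iteratedDeriv n (fun x => Real.exp (-x ^ 2)) t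

/-- Auxiliary polynomial sequence: `Q 0 = 1`, `Q (n+1) = Q n' - 2 X * Q n`. -/
noncomputable def hermiteQ : ℕ → Polynomial ℤ
  | 0 => 1
  | n + 1 => (hermiteQ n).derivative - 2 * Polynomial.X * hermiteQ n

lemma iteratedDeriv_gaussian_complex (n : ℕ) (z : ℂ) :
    iteratedDeriv n (fun x : ℂ => Complex.exp (-x ^ 2)) z =
      (Polynomial.aeval z) (hermiteQ n) * Complex.exp (-z ^ 2) := by
  induction n generalizing z with
  | zero => simp [hermiteQ]
  | succ n ih =>
    rw [iteratedDeriv_succ]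
    have hfun : iteratedDeriv n (fun x : ℂ => Complex.exp (-x ^ 2)) =
        fun z => (Polynomial.aeval z) (hermiteQ n) * Complex.exp (-z ^ 2) := funext ih
    rw [hfun]
    have h1 : HasDerivAt (fun z : ℂ => (Polynomial.aeval z) (hermiteQ n))
        ((Polynomial.aeval z) (hermiteQ n).derivative) z := by
      simpa [Polynomial.aeval_def, Polynomial.eval₂_eq_eval_map] using
        ((hermiteQ n).map (algebraMap ℤ ℂ)).hasDerivAt z
    have h2 : HasDerivAt (fun z : ℂ => Complex.exp (-z ^ 2))
        ((-2 * z) * Complex.exp (-z ^ 2)) z := by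
      have : HasDerivAt (fun z : ℂ => -z ^ 2) (-2 * z) z := by
        simpa using ((hasDerivAt_pow 2 z).fun_neg)
      simpa [mul_comm] using this.cexp
    have := (h1.fun_mul h2).deriv
    rw [this]
    simp only [hermiteQ, map_sub, map_mul, map_ofNat, Polynomial.aeval_X]
    ring

lemma iteratedDeriv_gaussian_real (n : ℕ) (t : ℝ) :
    iteratedDeriv n (fun x : ℝ => Real.exp (-x ^ 2)) t =
      (Polynomial.aeval t) (hermiteQ n) * Real.exp (-t ^ 2) := by
  induction n generalizing t with
  | zero => simp [hermiteQ]
  | succ n ih =>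
    rw [iteratedDeriv_succ]
    have hfun : iteratedDeriv n (fun x : ℝ => Real.exp (-x ^ 2)) =
        fun t => (Polynomial.aeval t) (hermiteQ n) * Real.exp (-t ^ 2) := funext ih
    rw [hfun]
    have h1 : HasDerivAt (fun t : ℝ => (Polynomial.aeval t) (hermiteQ n))
        ((Polynomial.aeval t) (hermiteQ n).derivative) t := by
      simpa [Polynomial.aeval_def, Polynomial.eval₂_eq_eval_map] using
        ((hermiteQ n).map (algebraMap ℤ ℝ)).hasDerivAt t
    have h2 : HasDerivAt (fun t : ℝ => Real.exp (-t ^ 2))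
        ((-2 * t) * Real.exp (-t ^ 2)) t := by
      have : HasDerivAt (fun t : ℝ => -t ^ 2) (-2 * t) t := by
        simpa using ((hasDerivAt_pow 2 t).fun_neg)
      simpa [mul_comm] using this.exp
    have := (h1.fun_mul h2).deriv
    rw [this]
    simp only [hermiteQ, map_sub, map_mul, map_ofNat, Polynomial.aeval_X]
    ring

lemma hermitePoly_eq (n : ℕ) (t : ℝ) :
    hermitePoly n t = (-1 : ℝ) ^ n * (Polynomial.aeval t) (hermiteQ n) := by
  rw [hermitePoly, iteratedDeriv_gaussian_real]
  have h : Real.exp (t ^ 2) * Real.exp (-t ^ 2) = 1 := by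
    rw [← Real.exp_add]; simp
  linear_combination ((-1 : ℝ) ^ n * (Polynomial.aeval t) (hermiteQ n)) * h

/-- Generating function identity for the Hermite polynomials:
`e^{2ts − s²} = Σ_{n=0}^{∞} (sⁿ/n!) Hₙ(t)`, the series converging. -/
theorem hermite_generating_function (t s : ℝ) :
    HasSum (fun n : ℕ => s ^ n / (Nat.factorial n : ℝ) * hermitePoly n t)
      (Real.exp (2 * t * s - s ^ 2)) := by
  have hent : Differentiable ℂ (fun z : ℂ => Complex.exp (-z ^ 2)) := by
    fun_prop
  have H := Complex.hasSum_taylorSeries_of_entire hent (t : ℂ) ((t : ℂ) - s)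
  -- multiply by exp(t^2)
  have H2 := H.mul_left (Complex.exp ((t : ℂ) ^ 2))
  have key : HasSum (fun n : ℕ => ((s ^ n / (Nat.factorial n : ℝ) * hermitePoly n t : ℝ) : ℂ))
      ((Real.exp (2 * t * s - s ^ 2) : ℝ) : ℂ) := by
    convert H2 using 2 with n
    · rfl
    · rw [iteratedDeriv_gaussian_complex]
      have haev : (Polynomial.aeval ((t : ℝ) : ℂ)) (hermiteQ n) =
          (((Polynomial.aeval t) (hermiteQ n) : ℝ) : ℂ) := by
        simpa using (Polynomial.aeval_algebraMap_apply ℂ t (hermiteQ n))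
      rw [haev, hermitePoly_eq]
      have hexp : Complex.exp ((t : ℂ) ^ 2) * Complex.exp (-(t : ℂ) ^ 2) = 1 := by
        rw [← Complex.exp_add]; simp
      push_cast
      rw [smul_eq_mul, smul_eq_mul]
      ring_nf
      linear_combination (-(s : ℂ) ^ n * ((Polynomial.aeval t) (hermiteQ n) : ℂ) *
        ((n.factorial : ℂ))⁻¹ * (-1) ^ n) * hexp
    · rw [Complex.ofReal_exp, ← Complex.exp_add]
      push_cast
      ring_nf
  rw [← Complex.hasSum_ofReal]
  exact key
end

section
/- For every t, s ∈ ℝ, e^{−(t−s)²} = Σ_{n=0}^{∞} (sⁿ/n!) hₙ(t), where the series converges. -/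
open Polynomial

/-- Auxiliary polynomials: `P 0 = 1`, `P (n+1) = P n' − 2X·P n`, so that
`(d/dx)^n e^{−x²} = P n (x) e^{−x²}`. -/
noncomputable def hermAux : ℕ → Polynomial ℝ
  | 0 => 1
  | n + 1 => (hermAux n).derivative - Polynomial.C 2 * Polynomial.X * hermAux n

lemma iteratedDeriv_gauss_real (n : ℕ) (t : ℝ) :
    iteratedDeriv n (fun x => Real.exp (-x ^ 2)) t
      = (hermAux n).eval t * Real.exp (-t ^ 2) := by
  induction n generalizing t with
  | zero => simp [hermAux]
  | succ n ih =>
    rw [iteratedDeriv_succ]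
    have h1 : deriv (iteratedDeriv n (fun x => Real.exp (-x ^ 2))) t
        = deriv (fun x => (hermAux n).eval x * Real.exp (-x ^ 2)) t := by
      apply Filter.EventuallyEq.deriv_eq
      filter_upwards with x using ih x
    rw [h1]
    have h2 : HasDerivAt (fun x : ℝ => (hermAux n).eval x * Real.exp (-x ^ 2))
        ((hermAux n).derivative.eval t * Real.exp (-t ^ 2)
          + (hermAux n).eval t * (Real.exp (-t ^ 2) * -(2 * t))) t := by
      have hp := (hermAux n).hasDerivAt t
      have hg : HasDerivAt (fun x : ℝ => Real.exp (-x ^ 2))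
          (Real.exp (-t ^ 2) * -(2 * t)) t := by
        have := ((hasDerivAt_pow 2 t).neg).exp
        simpa using this
      exact hp.mul hg
    rw [h2.deriv, hermAux]
    simp only [eval_sub, eval_mul, eval_C, eval_X]
    ring

lemma iteratedDeriv_gauss_complex (n : ℕ) (z : ℂ) :
    iteratedDeriv n (fun x : ℂ => Complex.exp (-x ^ 2)) z
      = Polynomial.aeval z (hermAux n) * Complex.exp (-z ^ 2) := by
  induction n generalizing z with
  | zero => simp [hermAux]
  | succ n ih =>
    rw [iteratedDeriv_succ]
    have h1 : deriv (iteratedDeriv n (fun x : ℂ => Complex.exp (-x ^ 2))) z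
        = deriv (fun x : ℂ => Polynomial.aeval x (hermAux n) * Complex.exp (-x ^ 2)) z := by
      apply Filter.EventuallyEq.deriv_eq
      filter_upwards with x using ih x
    rw [h1]
    have h2 : HasDerivAt (fun x : ℂ => Polynomial.aeval x (hermAux n) * Complex.exp (-x ^ 2))
        (Polynomial.aeval z (hermAux n).derivative * Complex.exp (-z ^ 2)
          + Polynomial.aeval z (hermAux n) * (Complex.exp (-z ^ 2) * -(2 * z))) z := by
      have hp := (hermAux n).hasDerivAt_aeval z
      have hg : HasDerivAt (fun x : ℂ => Complex.exp (-x ^ 2))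
          (Complex.exp (-z ^ 2) * -(2 * z)) z := by
        have := ((hasDerivAt_pow 2 z).neg).cexp
        simpa using this
      exact hp.mul hg
    rw [h2.deriv, hermAux]
    simp only [map_sub, map_mul, Polynomial.aeval_C, Polynomial.aeval_X]
    push_cast
    ring

/-- The `n`-th Hermite function: `hₙ(t) = (−1)ⁿ (dⁿ/dtⁿ) e^{−t²}`. -/
noncomputable def hermiteFun (n : ℕ) (t : ℝ) : ℝ :=
  (-1 : ℝ) ^ n * iteratedDeriv n (fun x => Real.exp (-x ^ 2)) t

/-- `e^{−(t−s)²} = Σ_{n=0}^{∞} (sⁿ/n!) hₙ(t)`, the series converging. -/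
theorem hermite_function_expansion (t s : ℝ) :
    HasSum (fun n : ℕ => s ^ n / (Nat.factorial n : ℝ) * hermiteFun n t)
      (Real.exp (-(t - s) ^ 2)) := by
  have hf : Differentiable ℂ (fun z : ℂ => Complex.exp (-z ^ 2)) :=
    ((differentiable_pow 2).neg).cexp
  have H := Complex.hasSum_taylorSeries_of_entire hf (t : ℂ) ((t - s : ℝ) : ℂ)
  rw [← Complex.hasSum_ofReal]
  convert H using 2 with n
  · rfl
  · rw [iteratedDeriv_gauss_complex]
    have haev : Polynomial.aeval (t : ℂ) (hermAux n)
        = Complex.ofReal ((hermAux n).eval t) := by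
      simpa using Polynomial.aeval_algebraMap_apply_eq_algebraMap_eval (A := ℂ) t (hermAux n)
    rw [haev]
    have hcast : ((t - s : ℝ) : ℂ) - (t : ℂ) = -(s : ℂ) := by push_cast; ring
    rw [hcast]
    simp only [hermiteFun, iteratedDeriv_gauss_real, smul_eq_mul]
    push_cast
    have hn : ((n.factorial : ℂ)) ≠ 0 := by
      exact_mod_cast (Nat.cast_ne_zero (R := ℂ)).mpr n.factorial_ne_zero
    field_simp
    ring
  · rw [Complex.ofReal_exp]
    push_cast
    ring_nf
end

section
/- Let D ≥ 1, h > 0, and t, s, s₀ ∈ ℝᴰ. Then the multivariate far-field (primal) Hermite expansion holds: e^{−‖t − s‖²/(2h²)} = Σ_{α ∈ ℕᴰ} (1/α!) ((s − s₀)/√(2h²))^α h_α((t − s₀)/√(2h²)), where ‖·‖ is the Euclidean norm, division of a vector by √(2h²) is componentwise scaling, and the multi-index series converges (e.g., the family is summable). -/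
open Finset Nat

/-- Multivariate Hermite function `h_α(x) = ∏_{d} h_{α[d]}(x[d])`. -/
noncomputable def hermiteFunMulti {D : ℕ} (α : Fin D → ℕ) (x : Fin D → ℝ) : ℝ :=
  ∏ d, hermiteFun (α d) (x d)

/-- Multi-index factorial `α! = ∏_d (α[d])!`. -/
def mFactorial {D : ℕ} (α : Fin D → ℕ) : ℕ := ∏ d, Nat.factorial (α d)

/-- Multi-index power `x^α = ∏_d (x[d])^{α[d]}`. -/
def mPow {D : ℕ} (x : Fin D → ℝ) (α : Fin D → ℕ) : ℝ := ∏ d, (x d) ^ (α d)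

/-- If an entire function restricts to a real function on `ℝ`, so do its iterated
derivatives. -/
lemma aux_iteratedDeriv_ofReal {f : ℂ → ℂ} (hf : Differentiable ℂ f) {g : ℝ → ℝ}
    (hfg : ∀ x : ℝ, f x = (g x : ℂ)) :
    ∀ (n : ℕ) (x : ℝ), iteratedDeriv n f x = ((iteratedDeriv n g x : ℝ) : ℂ) := by
  intro n
  induction n with
  | zero => simpa using hfg
  | succ n ih =>
    intro z
    have hdiff : Differentiable ℂ (iteratedDeriv n f) :=
      (hf.contDiff (n := (n + 1 : ℕ))).differentiable_iteratedDeriv'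
    have hF : HasDerivAt (iteratedDeriv n f) (deriv (iteratedDeriv n f) z) z :=
      (hdiff z).hasDerivAt
    have hre : HasDerivAt (fun x : ℝ => (iteratedDeriv n f x).re)
        (deriv (iteratedDeriv n f) z).re z := hF.real_of_complex
    have hG : HasDerivAt (iteratedDeriv n g) (deriv (iteratedDeriv n f) z).re z := by
      refine hre.congr_of_eventuallyEq (Filter.Eventually.of_forall fun x => ?_)
      simp [ih x]
    have h1 : HasDerivAt (fun x : ℝ => iteratedDeriv n f x)
        (deriv (iteratedDeriv n f) z) z := hF.comp_ofReal
    have h2 : HasDerivAt (fun x : ℝ => iteratedDeriv n f x)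
        (((deriv (iteratedDeriv n f) z).re : ℂ)) z := by
      refine hG.ofReal_comp.congr_of_eventuallyEq (Filter.Eventually.of_forall fun x => ?_)
      simp [ih x]
    have hc : deriv (iteratedDeriv n f) ↑z = ((deriv (iteratedDeriv n f) z).re : ℂ) :=
      h1.unique h2
    rw [iteratedDeriv_succ, iteratedDeriv_succ, hG.deriv, hc]
    simp

/-- One-dimensional Hermite generating-function expansion. -/
lemma aux_hermite_key (x : ℝ) (n : ℕ) :
    iteratedDeriv n (fun z : ℂ => Complex.exp (-((x : ℂ) - z) ^ 2)) 0
      = ((hermiteFun n x : ℝ) : ℂ) := by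
  have hG : Differentiable ℂ (fun z : ℂ => Complex.exp (-z ^ 2)) :=
    ((differentiable_id.pow 2).neg).cexp
  have h1 : iteratedDeriv n (fun z : ℂ => Complex.exp (-((x : ℂ) - z) ^ 2)) 0
      = (-1 : ℂ) ^ n • iteratedDeriv n (fun w : ℂ => Complex.exp (-((x : ℂ) + w) ^ 2)) (-0) := by
    have := iteratedDeriv_comp_neg n (fun w : ℂ => Complex.exp (-((x : ℂ) + w) ^ 2)) 0
    simpa [sub_eq_add_neg] using this
  have h2 : iteratedDeriv n (fun w : ℂ => Complex.exp (-((x : ℂ) + w) ^ 2)) (-0)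
      = iteratedDeriv n (fun z : ℂ => Complex.exp (-z ^ 2)) x := by
    have := iteratedDeriv_comp_const_add n (fun z : ℂ => Complex.exp (-z ^ 2)) (x : ℂ)
    rw [congrFun this (-0)]
    norm_num
  rw [h1, h2, aux_iteratedDeriv_ofReal hG (g := fun x : ℝ => Real.exp (-x ^ 2))
    (fun x => by push_cast [Complex.ofReal_exp]; norm_num) n x]
  rw [hermiteFun]
  push_cast
  rw [smul_eq_mul]

lemma aux_hasSum_1d (x y : ℝ) :
    HasSum (fun n : ℕ => 1 / (n ! : ℝ) * y ^ n * hermiteFun n x)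
      (Real.exp (-(x - y) ^ 2)) := by
  have hF : Differentiable ℂ (fun z : ℂ => Complex.exp (-((x : ℂ) - z) ^ 2)) :=
    (((differentiable_const _).sub differentiable_id).pow 2).neg.cexp
  have hs := Complex.hasSum_taylorSeries_of_entire hF 0 (y : ℂ)
  have key : ∀ n : ℕ, ((1 / (n ! : ℝ) * y ^ n * hermiteFun n x : ℝ) : ℂ)
      = (n ! : ℂ)⁻¹ • ((y : ℂ) - 0) ^ n •
          iteratedDeriv n (fun z : ℂ => Complex.exp (-((x : ℂ) - z) ^ 2)) 0 := by
    intro n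
    rw [aux_hermite_key x n]
    push_cast
    rw [smul_eq_mul, smul_eq_mul]
    ring
  have htgt : Complex.exp (-((x : ℂ) - (y : ℂ)) ^ 2)
      = ((Real.exp (-(x - y) ^ 2) : ℝ) : ℂ) := by
    push_cast [Complex.ofReal_exp]
    norm_num
  rw [← Complex.hasSum_ofReal, ← htgt, funext key]
  exact hs

lemma aux_summable_abs_1d (x y : ℝ) :
    Summable (fun n : ℕ => |1 / (n ! : ℝ) * y ^ n * hermiteFun n x|) := by
  have hF : Differentiable ℂ (fun z : ℂ => Complex.exp (-((x : ℂ) - z) ^ 2)) :=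
    (((differentiable_const _).sub differentiable_id).pow 2).neg.cexp
  set R : ℝ := 2 * |y| + 1 with hR
  have hRpos : (0 : ℝ) < R := by positivity
  have hs := (Complex.hasSum_taylorSeries_of_entire hF 0 (R : ℂ)).summable
  have htend := hs.tendsto_atTop_zero
  have hbdd : BddAbove (Set.range fun n : ℕ =>
      ‖(n ! : ℂ)⁻¹ • ((R : ℂ) - 0) ^ n • iteratedDeriv n
        (fun z : ℂ => Complex.exp (-((x : ℂ) - z) ^ 2)) 0‖) :=
    (htend.norm.congr (fun n => rfl)).bddAbove_range
  obtain ⟨C, hC⟩ := hbdd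
  have hC' : ∀ n : ℕ, (n ! : ℝ)⁻¹ * R ^ n * |hermiteFun n x| ≤ C := by
    intro n
    have := hC (Set.mem_range_self n)
    rw [aux_hermite_key x n] at this
    simpa [norm_smul, abs_of_pos hRpos, mul_assoc] using this
  refine Summable.of_nonneg_of_le (fun n => abs_nonneg _)
    (fun n => ?_) ((summable_geometric_two).mul_left C)
  have hyR : |y| ≤ R / 2 := by rw [hR]; linarith [abs_nonneg y]
  calc |1 / (n ! : ℝ) * y ^ n * hermiteFun n x|
      = (n ! : ℝ)⁻¹ * |y| ^ n * |hermiteFun n x| := by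
        rw [abs_mul, abs_mul, abs_pow, abs_of_nonneg (by positivity : (0:ℝ) ≤ 1 / (n ! : ℝ))]
        rw [one_div]
    _ ≤ (n ! : ℝ)⁻¹ * (R / 2) ^ n * |hermiteFun n x| :=
        mul_le_mul_of_nonneg_right (mul_le_mul_of_nonneg_left
          (pow_le_pow_left₀ (abs_nonneg y) hyR n) (by positivity)) (abs_nonneg _)
    _ = ((n ! : ℝ)⁻¹ * R ^ n * |hermiteFun n x|) * (1 / 2) ^ n := by
        rw [div_pow, div_pow, one_pow]; ring
    _ ≤ C * (1 / 2) ^ n :=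
        mul_le_mul_of_nonneg_right (hC' n) (by positivity)

set_option maxHeartbeats 1000000 in
/-- Product of `D` absolutely convergent sums, indexed by `Fin D → ℕ`. -/
lemma aux_hasSum_pi : ∀ (D : ℕ) (f : Fin D → ℕ → ℝ) (a : Fin D → ℝ),
    (∀ d, HasSum (f d) (a d)) → (∀ d, Summable fun n => |f d n|) →
    HasSum (fun α : Fin D → ℕ => ∏ d, f d (α d)) (∏ d, a d) ∧
      Summable (fun α : Fin D → ℕ => |∏ d, f d (α d)|) := by
  intro D
  induction D with
  | zero =>
    intro f a _ _
    have h1 : HasSum (fun _ : Fin 0 → ℕ => (1 : ℝ)) 1 := by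
      refine (hasSum_ite_eq (fun _ : Fin 0 => 0) (1 : ℝ)).congr_fun fun α => ?_
      rw [if_pos (Subsingleton.elim α _)]
    constructor
    · simpa using h1
    · refine (h1.summable.congr fun α => ?_)
      simp
  | succ D ih =>
    intro f a hsum habs
    obtain ⟨ih1, ih2⟩ := ih (fun d => f d.succ) (fun d => a d.succ)
      (fun d => hsum d.succ) (fun d => habs d.succ)
    have habs' : Summable (fun p : ℕ × (Fin D → ℕ) =>
        |f 0 p.1 * ∏ d : Fin D, f d.succ (p.2 d)|) := by
      have := Summable.mul_of_nonneg (habs 0) ih2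
        (fun n => abs_nonneg _) (fun α => abs_nonneg _)
      refine this.congr fun p => ?_
      rw [abs_mul]
    have habs'' : Summable (fun p : ℕ × (Fin D → ℕ) =>
        f 0 p.1 * ∏ d : Fin D, f d.succ (p.2 d)) := summable_abs_iff.mp habs'
    have hmul : HasSum (fun p : ℕ × (Fin D → ℕ) =>
        f 0 p.1 * ∏ d : Fin D, f d.succ (p.2 d)) (a 0 * ∏ d : Fin D, a d.succ) := by
      exact HasSum.mul (f := f 0) (g := fun α : Fin D → ℕ => ∏ d : Fin D, f d.succ (α d))
        (hsum 0) ih1 habs''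
    have hkey : ∀ p : ℕ × (Fin D → ℕ),
        (∏ d : Fin (D+1), f d (((Fin.consEquiv (fun _ : Fin (D+1) => ℕ)) p) d)) =
          f 0 p.1 * ∏ d : Fin D, f d.succ (p.2 d) := by
      intro p
      rw [Fin.prod_univ_succ]
      simp [Fin.consEquiv]
    constructor
    · rw [← (Fin.consEquiv (fun _ : Fin (D+1) => ℕ)).hasSum_iff]
      rw [Fin.prod_univ_succ]
      exact hmul.congr_fun fun p => hkey p
    · rw [← (Fin.consEquiv (fun _ : Fin (D+1) => ℕ)).summable_iff]
      refine habs'.congr fun p => ?_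
      rw [Function.comp_apply (g := (Fin.consEquiv (fun _ : Fin (D+1) => ℕ)))] at *
      rw [hkey p]

/-- Multivariate far-field (primal) Hermite expansion:
`e^{−‖t − s‖²/(2h²)} = Σ_{α ∈ ℕᴰ} (1/α!) ((s − s₀)/√(2h²))^α h_α((t − s₀)/√(2h²))`,
the multi-index family being summable. -/
theorem multivariate_farfield_expansion (D : ℕ) (hD : 1 ≤ D) (h : ℝ) (hh : 0 < h)
    (t s s₀ : Fin D → ℝ) :
    HasSum
      (fun α : Fin D → ℕ => (1 / (mFactorial α : ℝ)) *
        mPow (fun d => (s d - s₀ d) / Real.sqrt (2 * h ^ 2)) α *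
        hermiteFunMulti α (fun d => (t d - s₀ d) / Real.sqrt (2 * h ^ 2)))
      (Real.exp (-(∑ d, (t d - s d) ^ 2) / (2 * h ^ 2))) := by
  set c : ℝ := Real.sqrt (2 * h ^ 2) with hc
  have hc2 : c ^ 2 = 2 * h ^ 2 := Real.sq_sqrt (by positivity)
  have hcpos : 0 < c := Real.sqrt_pos.mpr (by positivity)
  set X : Fin D → ℝ := fun d => (t d - s₀ d) / c with hX
  set Y : Fin D → ℝ := fun d => (s d - s₀ d) / c with hY
  have main := (aux_hasSum_pi D
    (fun d n => 1 / (n ! : ℝ) * Y d ^ n * hermiteFun n (X d))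
    (fun d => Real.exp (-(X d - Y d) ^ 2))
    (fun d => aux_hasSum_1d (X d) (Y d))
    (fun d => aux_summable_abs_1d (X d) (Y d))).1
  have hterm : ∀ α : Fin D → ℕ,
      (∏ d, 1 / ((α d)! : ℝ) * Y d ^ (α d) * hermiteFun (α d) (X d))
        = (1 / (mFactorial α : ℝ)) * mPow Y α * hermiteFunMulti α X := by
    intro α
    rw [mFactorial, mPow, hermiteFunMulti]
    rw [Finset.prod_mul_distrib, Finset.prod_mul_distrib]
    congr 1
    congr 1
    rw [Nat.cast_prod, one_div, ← Finset.prod_inv_distrib]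
    exact Finset.prod_congr rfl fun d _ => (one_div _)
  have htarget : (∏ d, Real.exp (-(X d - Y d) ^ 2))
      = Real.exp (-(∑ d, (t d - s d) ^ 2) / (2 * h ^ 2)) := by
    rw [← Real.exp_sum]
    congr 1
    rw [neg_div, Finset.sum_div, ← Finset.sum_neg_distrib]
    refine Finset.sum_congr rfl fun d _ => ?_
    rw [hX, hY]
    have : (t d - s₀ d) / c - (s d - s₀ d) / c = (t d - s d) / c := by ring
    rw [this, div_pow, hc2]
  rw [← htarget]
  exact main.congr_fun fun α => (hterm α).symm
end

section
/- Let h > 0, 0 < ρ < 1, p ≥ 1 an integer, and let s, c, t ∈ ℝ with |s − c| < ρh. Then the partial sum of the one-dimensional Hermite expansion is bounded: |Σ_{n=0}^{p−1} (1/n!) ((s − c)/√(2h²))ⁿ hₙ((t − c)/√(2h²))| ≤ (1 − ρᵖ)/(1 − ρ). -/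
open Finset
open scoped NNReal

/-- The complex Gaussian. -/
noncomputable def cGauss : ℂ → ℂ := fun z => Complex.exp (-z ^ 2)

lemma cGauss_contDiff : ContDiff ℂ (⊤ : ℕ∞) cGauss :=
  Complex.contDiff_exp.comp ((contDiff_id.pow 2).neg)

lemma cGauss_diff : Differentiable ℂ cGauss :=
  Complex.differentiable_exp.comp ((differentiable_id.pow 2).neg)

lemma cGauss_iter_diff (n : ℕ) : Differentiable ℂ (iteratedDeriv n cGauss) := by
  rw [iteratedDeriv_eq_iterate]
  exact (cGauss_contDiff.iterate_deriv n).differentiable (by simp)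

lemma gauss_real_eq (n : ℕ) : iteratedDeriv n (fun x : ℝ => Real.exp (-x ^ 2))
    = fun t : ℝ => (iteratedDeriv n cGauss (t : ℂ)).re := by
  induction n with
  | zero =>
    funext t
    simp only [iteratedDeriv_zero, cGauss]
    rw [show (-(t:ℂ)^2) = ((-t^2 : ℝ) : ℂ) by push_cast; ring, ← Complex.ofReal_exp,
      Complex.ofReal_re]
  | succ n ih =>
    funext t
    rw [iteratedDeriv_succ, ih, iteratedDeriv_succ]
    exact (((cGauss_iter_diff n) t).hasDerivAt.real_of_complex).deriv

lemma cGauss_bound_on_circle (c : ℝ) (r : ℝ) (θ : ℝ) :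
    ‖cGauss (circleMap (c : ℂ) r θ)‖ ≤ Real.exp (r ^ 2) := by
  set z := circleMap (c : ℂ) r θ with hz
  have him : |z.im| ≤ |r| := by
    have h1 : z - c = circleMap 0 r θ := circleMap_sub_center _ _ _
    have h2 : ‖z - c‖ = |r| := by rw [h1, norm_circleMap_zero]
    calc |z.im| = |(z - c).im| := by simp
      _ ≤ ‖z - c‖ := Complex.abs_im_le_norm _
      _ = |r| := h2
  rw [show cGauss z = Complex.exp (-z^2) from rfl, Complex.norm_exp]
  apply Real.exp_le_exp.mpr
  have h3 : (-z ^ 2).re = z.im ^ 2 - z.re ^ 2 := by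
    simp [pow_two, Complex.mul_re]
  rw [h3]
  have h4 : z.im ^ 2 ≤ r ^ 2 := by
    have := sq_le_sq' (neg_le_of_abs_le him) (le_of_abs_le him)
    simpa [sq_abs] using this
  nlinarith [sq_nonneg z.re]

lemma cGauss_cauchy_bound (n : ℕ) (c : ℝ) (r : ℝ≥0) (hr : 0 < r) :
    ‖iteratedDeriv n cGauss (c : ℂ)‖ ≤ (n.factorial : ℝ) * Real.exp ((r : ℝ) ^ 2) / (r : ℝ) ^ n := by
  have hF : HasFPowerSeriesOnBall cGauss (cauchyPowerSeries cGauss (c : ℂ) r) (c : ℂ) ⊤ :=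
    cGauss_diff.hasFPowerSeriesOnBall (c : ℂ) hr
  have h1 : iteratedDeriv n cGauss (c : ℂ)
      = (n.factorial : ℂ) • cauchyPowerSeries cGauss (c : ℂ) r n (fun _ => 1) := by
    rw [iteratedDeriv_eq_iteratedFDeriv, ← hF.factorial_smul (1 : ℂ) n]
    simp [nsmul_eq_mul]
  rw [h1]
  have h2 : ‖cauchyPowerSeries cGauss (c : ℂ) r n (fun _ => (1:ℂ))‖
      ≤ ‖cauchyPowerSeries cGauss (c : ℂ) r n‖ := by
    have := (cauchyPowerSeries cGauss (c : ℂ) r n).le_opNorm (fun _ => (1:ℂ))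
    simpa using this
  have h3 : ‖cauchyPowerSeries cGauss (c : ℂ) r n‖ ≤ Real.exp ((r:ℝ)^2) * |(r:ℝ)|⁻¹ ^ n := by
    refine (norm_cauchyPowerSeries_le cGauss (c:ℂ) r n).trans ?_
    apply mul_le_mul_of_nonneg_right ?_ (by positivity)
    have hint : ∫ θ : ℝ in (0)..2 * Real.pi, ‖cGauss (circleMap (c:ℂ) r θ)‖ ≤
        ∫ _ : ℝ in (0)..2 * Real.pi, Real.exp ((r:ℝ)^2) := by
      apply intervalIntegral.integral_mono_on Real.two_pi_pos.le
      · apply Continuous.intervalIntegrable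
        exact ((Complex.continuous_exp.comp ((continuous_pow 2).neg)).comp
          (continuous_circleMap _ _)).norm
      · exact intervalIntegrable_const
      · intro θ _; exact cGauss_bound_on_circle c r θ
    rw [intervalIntegral.integral_const, smul_eq_mul, sub_zero] at hint
    calc (2 * Real.pi)⁻¹ * ∫ θ : ℝ in (0)..2 * Real.pi, ‖cGauss (circleMap (c:ℂ) r θ)‖
        ≤ (2 * Real.pi)⁻¹ * (2 * Real.pi * Real.exp ((r:ℝ)^2)) := by
          have : (0:ℝ) ≤ (2 * Real.pi)⁻¹ := by positivity
          exact mul_le_mul_of_nonneg_left hint this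
      _ = Real.exp ((r:ℝ)^2) := by field_simp
  calc ‖(n.factorial : ℂ) • cauchyPowerSeries cGauss (c : ℂ) r n (fun _ => (1:ℂ))‖
      = (n.factorial : ℝ) * ‖cauchyPowerSeries cGauss (c : ℂ) r n (fun _ => (1:ℂ))‖ := by
        simp [norm_smul]
    _ ≤ (n.factorial : ℝ) * (Real.exp ((r:ℝ)^2) * |(r:ℝ)|⁻¹ ^ n) := by
        gcongr
        exact h2.trans h3
    _ = (n.factorial : ℝ) * Real.exp ((r : ℝ) ^ 2) / (r : ℝ) ^ n := by
        rw [abs_of_nonneg r.coe_nonneg]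
        field_simp
        rw [← mul_pow, one_div_mul_cancel (ne_of_gt (by exact_mod_cast hr)), one_pow]

lemma gauss_deriv (x : ℝ) : HasDerivAt (fun x : ℝ => Real.exp (-x ^ 2))
    (Real.exp (-x ^ 2) * (-(2 * x))) x := by
  simpa using ((hasDerivAt_pow 2 x).neg).exp

lemma gauss_iter2 (u : ℝ) : iteratedDeriv 2 (fun x : ℝ => Real.exp (-x ^ 2)) u
    = Real.exp (-u ^ 2) * (-(2 * u)) * (-(2 * u)) + Real.exp (-u ^ 2) * (-2) := by
  rw [show (2:ℕ) = 1 + 1 from rfl, iteratedDeriv_succ, iteratedDeriv_one]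
  have hder : deriv (fun x : ℝ => Real.exp (-x ^ 2))
      = fun x => Real.exp (-x ^ 2) * (-(2 * x)) := funext fun x => (gauss_deriv x).deriv
  rw [hder]
  have h2 : HasDerivAt (fun x : ℝ => -(2 * x)) (-2) u := by
    simpa [Pi.neg_def] using ((hasDerivAt_id u).const_mul (2:ℝ)).neg
  exact ((gauss_deriv u).mul h2).deriv

lemma small_bound1 (u : ℝ) : |Real.exp (-u ^ 2) * (-(2 * u))| ≤ Real.sqrt 2 := by
  have hmul : Real.exp (-u ^ 2) * Real.exp (u ^ 2) = 1 := by
    rw [← Real.exp_add]; simp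
  have he : 1 + u ^ 2 ≤ Real.exp (u ^ 2) := by linarith [Real.add_one_le_exp (u ^ 2)]
  have hpos : 0 < Real.exp (-u ^ 2) := Real.exp_pos _
  have hs0 : 0 < Real.sqrt 2 := Real.sqrt_pos.mpr (by norm_num)
  rw [abs_mul, abs_of_pos hpos, abs_neg, abs_mul, abs_two]
  have hs : Real.sqrt 2 ^ 2 = 2 := Real.sq_sqrt (by norm_num)
  have h1 : 2 * |u| ≤ Real.sqrt 2 * (1 + u ^ 2) := by
    nlinarith [sq_nonneg (Real.sqrt 2 * |u| - 1), sq_abs u, abs_nonneg u, hs]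
  calc Real.exp (-u ^ 2) * (2 * |u|)
      ≤ Real.exp (-u ^ 2) * (Real.sqrt 2 * Real.exp (u ^ 2)) := by
        apply mul_le_mul_of_nonneg_left _ hpos.le
        exact h1.trans (mul_le_mul_of_nonneg_left (by linarith) hs0.le)
    _ = Real.sqrt 2 := by
        rw [mul_comm (Real.sqrt 2), ← mul_assoc, hmul, one_mul]

lemma small_bound2 (u : ℝ) :
    |Real.exp (-u ^ 2) * (-(2 * u)) * (-(2 * u)) + Real.exp (-u ^ 2) * (-2)| ≤ 4 := by
  have hmul : Real.exp (-u ^ 2) * Real.exp (u ^ 2) = 1 := by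
    rw [← Real.exp_add]; simp
  have he : 1 + u ^ 2 ≤ Real.exp (u ^ 2) := by linarith [Real.add_one_le_exp (u ^ 2)]
  have hpos : 0 < Real.exp (-u ^ 2) := Real.exp_pos _
  rw [abs_le]
  constructor <;> nlinarith [sq_nonneg u, mul_pos hpos (Real.exp_pos (u^2)),
    mul_le_mul_of_nonneg_left he hpos.le]

/-- The key bound `|dⁿ/dtⁿ e^{-t²}| ≤ n! ⋅ (√2)ⁿ`. -/
lemma gauss_iter_bound (n : ℕ) (u : ℝ) :
    |iteratedDeriv n (fun x : ℝ => Real.exp (-x ^ 2)) u|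
      ≤ (n.factorial : ℝ) * Real.sqrt 2 ^ n := by
  match n with
  | 0 =>
    simp only [iteratedDeriv_zero, Nat.factorial_zero, Nat.cast_one, pow_zero, mul_one]
    rw [abs_of_pos (Real.exp_pos _)]
    exact Real.exp_le_one_iff.mpr (neg_nonpos.mpr (sq_nonneg u))
  | 1 =>
    rw [iteratedDeriv_one, (gauss_deriv u).deriv]
    simpa using small_bound1 u
  | 2 =>
    rw [gauss_iter2]
    have : ((Nat.factorial 2 : ℕ) : ℝ) * Real.sqrt 2 ^ 2 = 4 := by
      rw [Real.sq_sqrt (by norm_num : (0:ℝ) ≤ 2)]; norm_num [Nat.factorial]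
    rw [this]
    exact small_bound2 u
  | (m + 3) =>
    set n := m + 3 with hn
    have hn3 : (3 : ℝ) ≤ (n : ℝ) := by exact_mod_cast Nat.le_add_left 3 m
    have hn0 : (0 : ℝ) < (n : ℝ) := by linarith
    set r0 : ℝ := Real.sqrt ((n : ℝ) / 2) with hr0
    have hr0pos : 0 < r0 := Real.sqrt_pos.mpr (by positivity)
    have hsq : r0 ^ 2 = (n : ℝ) / 2 := Real.sq_sqrt (by positivity)
    have h0 : |iteratedDeriv n (fun x : ℝ => Real.exp (-x ^ 2)) u|
        ≤ ‖iteratedDeriv n cGauss (u : ℂ)‖ := by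
      rw [gauss_real_eq]
      exact Complex.abs_re_le_norm _
    have hC := cGauss_cauchy_bound n u ⟨r0, hr0pos.le⟩ (by exact_mod_cast hr0pos)
    change ‖_‖ ≤ (n.factorial : ℝ) * Real.exp (r0 ^ 2) / r0 ^ n at hC
    refine (h0.trans hC).trans ?_
    rw [hsq, div_le_iff₀ (by positivity)]
    have hexp : Real.exp ((n : ℝ) / 2) = Real.exp (1 / 2) ^ n := by
      rw [← Real.exp_nat_mul]; ring_nf
    have hbase : Real.exp (1 / 2) ≤ Real.sqrt 2 * r0 := by
      have hsn : Real.sqrt 2 * r0 = Real.sqrt (n : ℝ) := by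
        rw [hr0, ← Real.sqrt_mul (by norm_num : (0:ℝ) ≤ 2)]
        congr 1; ring
      rw [hsn]
      rw [show (1 : ℝ) / 2 = 2⁻¹ by norm_num]
      apply (Real.le_sqrt (Real.exp_pos _).le (by positivity)).mpr
      have : Real.exp (2⁻¹ : ℝ) ^ 2 = Real.exp 1 := by
        rw [← Real.exp_nat_mul]; norm_num
      rw [this]
      linarith [Real.exp_one_lt_d9]
    calc (n.factorial : ℝ) * Real.exp ((n : ℝ) / 2)
        = (n.factorial : ℝ) * Real.exp (1/2) ^ n := by rw [hexp]
      _ ≤ (n.factorial : ℝ) * (Real.sqrt 2 * r0) ^ n := by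
          have := pow_le_pow_left₀ (Real.exp_pos (1/2 : ℝ)).le hbase n
          gcongr
      _ = (n.factorial : ℝ) * Real.sqrt 2 ^ n * r0 ^ n := by
          rw [mul_pow]; ring

lemma hermiteFun_bound (n : ℕ) (u : ℝ) :
    |hermiteFun n u| ≤ (n.factorial : ℝ) * Real.sqrt 2 ^ n := by
  rw [hermiteFun, abs_mul, abs_pow, abs_neg, abs_one, one_pow, one_mul]
  exact gauss_iter_bound n u

/-- Bound on the partial sum of the one-dimensional Hermite expansion:
if `|s − c| < ρh` with `0 < ρ < 1`, then
`|Σ_{n=0}^{p−1} (1/n!) ((s − c)/√(2h²))ⁿ hₙ((t − c)/√(2h²))| ≤ (1 − ρᵖ)/(1 − ρ)`. -/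
theorem hermite_partial_sum_bound (h ρ : ℝ) (hh : 0 < h) (hρ0 : 0 < ρ) (hρ1 : ρ < 1)
    (p : ℕ) (hp : 1 ≤ p) (s c t : ℝ) (hsc : |s - c| < ρ * h) :
    |∑ n ∈ Finset.range p, (1 / (Nat.factorial n : ℝ)) *
        ((s - c) / Real.sqrt (2 * h ^ 2)) ^ n *
        hermiteFun n ((t - c) / Real.sqrt (2 * h ^ 2))|
      ≤ (1 - ρ ^ p) / (1 - ρ) := by
  set u := (t - c) / Real.sqrt (2 * h ^ 2)
  set a := (s - c) / Real.sqrt (2 * h ^ 2) with ha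
  have hsqrt : Real.sqrt (2 * h ^ 2) = Real.sqrt 2 * h := by
    rw [Real.sqrt_mul (by norm_num : (0:ℝ) ≤ 2), Real.sqrt_sq hh.le]
  have hs2 : 0 < Real.sqrt 2 := Real.sqrt_pos.mpr (by norm_num)
  have hkey : |a| * Real.sqrt 2 ≤ ρ := by
    rw [ha, hsqrt, abs_div, abs_of_pos (mul_pos hs2 hh)]
    rw [div_mul_eq_mul_div, div_le_iff₀ (by positivity)]
    nlinarith [mul_le_mul_of_nonneg_right hsc.le hs2.le]
  have hterm : ∀ n, |(1 / (Nat.factorial n : ℝ)) * a ^ n * hermiteFun n u| ≤ ρ ^ n := by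
    intro n
    have hf : (0:ℝ) < (Nat.factorial n : ℝ) := by exact_mod_cast n.factorial_pos
    rw [abs_mul, abs_mul, abs_pow, abs_div, abs_one, abs_of_pos hf]
    calc 1 / (Nat.factorial n : ℝ) * |a| ^ n * |hermiteFun n u|
        ≤ 1 / (Nat.factorial n : ℝ) * |a| ^ n * ((Nat.factorial n : ℝ) * Real.sqrt 2 ^ n) := by
          apply mul_le_mul_of_nonneg_left (hermiteFun_bound n u) (by positivity)
      _ = (|a| * Real.sqrt 2) ^ n := by
          field_simp [mul_pow]; ring
      _ ≤ ρ ^ n := pow_le_pow_left₀ (by positivity) hkey n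
  calc |∑ n ∈ Finset.range p, (1 / (Nat.factorial n : ℝ)) * a ^ n * hermiteFun n u|
      ≤ ∑ n ∈ Finset.range p, |(1 / (Nat.factorial n : ℝ)) * a ^ n * hermiteFun n u| :=
        Finset.abs_sum_le_sum_abs _ _
    _ ≤ ∑ n ∈ Finset.range p, ρ ^ n := Finset.sum_le_sum fun n _ => hterm n
    _ = (1 - ρ ^ p) / (1 - ρ) := by
        rw [geom_sum_eq (by linarith : ρ ≠ 1)]
        rw [show ρ ^ p - 1 = -(1 - ρ ^ p) by ring, show ρ - 1 = -(1 - ρ) by ring,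
          neg_div_neg_eq]
end
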